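/- Let X and Y be m-dimensional subspaces of ℝⁿ with orthogonal complements X⊥ and Y⊥. Then the nonzero canonical angles between X and Y coincide (with multiplicity) with the nonzero canonical angles between X⊥ and Y⊥. -/

import Mathlib

open Matrix

namespace Stmt10Aux

open Polynomial

lemma eval_charpoly {k : ℕ} (M : Matrix (Fin k) (Fin k) ℝ) (t : ℝ) :
    (M.charpoly).eval t = (t • (1 : Matrix (Fin k) (Fin k) ℝ) - M).det := by
  rw [Matrix.charpoly, ← Polynomial.coe_evalRingHom, RingHom.map_det]
  congr 1
  ext i j
  by_cases h : i = j
  · subst h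
    simp [charmatrix_apply_eq, Matrix.smul_apply, Matrix.one_apply]
  · simp [charmatrix_apply_ne _ _ _ h, Matrix.smul_apply, Matrix.one_apply, h]

lemma charpoly_eq {k : ℕ} {M : Matrix (Fin k) (Fin k) ℝ} (hM : M.IsHermitian) :
    M.charpoly = ∏ i, (X - C (hM.eigenvalues i)) := by
  apply Polynomial.funext
  intro t
  rw [eval_charpoly, Polynomial.eval_prod]
  simp only [Polynomial.eval_sub, Polynomial.eval_X, Polynomial.eval_C]
  set U := (hM.eigenvectorUnitary : Matrix (Fin k) (Fin k) ℝ) with hUdef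
  have hUU : U * star U = 1 := (Matrix.mem_unitaryGroup_iff).mp (hM.eigenvectorUnitary).2
  have key : t • (1 : Matrix (Fin k) (Fin k) ℝ) - M =
      U * (t • 1 - diagonal hM.eigenvalues) * star U := by
    rw [Matrix.mul_sub, Matrix.sub_mul]
    congr 1
    · rw [Matrix.mul_smul, Matrix.mul_one, Matrix.smul_mul, hUU]
    · conv_lhs => rw [hM.spectral_theorem]
      simp
      rfl
  rw [key, Matrix.det_mul_right_comm, hUU, Matrix.one_mul, Matrix.smul_one_eq_diagonal,
    Matrix.diagonal_sub, Matrix.det_diagonal]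

lemma eig_multiset {k : ℕ} {M : Matrix (Fin k) (Fin k) ℝ} (hM : M.IsHermitian) :
    Finset.univ.val.map hM.eigenvalues = M.charpoly.roots := by
  rw [charpoly_eq hM]
  have h : ∏ i, (X - C (hM.eigenvalues i)) =
      ((Finset.univ.val.map hM.eigenvalues).map fun a => X - C a).prod := by
    rw [Multiset.map_map]
    rfl
  rw [h, Polynomial.roots_multiset_prod_X_sub_C]

lemma key_det {p q : ℕ} (M : Matrix (Fin p) (Fin q) ℝ) (N : Matrix (Fin q) (Fin p) ℝ)
    {s : ℝ} (hs : s ≠ 0) :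
    (s • (1 : Matrix (Fin p) (Fin p) ℝ) + M * N).det * s ^ q
      = (s • (1 : Matrix (Fin q) (Fin q) ℝ) + N * M).det * s ^ p := by
  have h1 : s • (1 : Matrix (Fin p) (Fin p) ℝ) + M * N = s • (1 + M * (s⁻¹ • N)) := by
    rw [smul_add, Matrix.mul_smul, smul_smul, mul_inv_cancel₀ hs, one_smul]
  have h2 : s • (1 : Matrix (Fin q) (Fin q) ℝ) + N * M = s • (1 + (s⁻¹ • N) * M) := by
    rw [smul_add, Matrix.smul_mul, smul_smul, mul_inv_cancel₀ hs, one_smul]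
  rw [h1, h2, Matrix.det_smul, Matrix.det_smul, Matrix.det_one_add_mul_comm,
    Fintype.card_fin, Fintype.card_fin]
  ring

lemma charpoly_comm_square {k : ℕ} (B : Matrix (Fin k) (Fin k) ℝ) :
    (Bᵀ * B).charpoly = (B * Bᵀ).charpoly := by
  apply Polynomial.eq_of_infinite_eval_eq
  apply ((Set.finite_singleton (0 : ℝ)).infinite_compl).mono
  intro t ht
  have ht' : t ≠ 0 := ht
  have h := key_det Bᵀ (-B) ht'
  simp only [Matrix.mul_neg, Matrix.neg_mul, ← sub_eq_add_neg] at h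
  have := mul_right_cancel₀ (pow_ne_zero k ht') h
  simp only [Set.mem_setOf_eq, eval_charpoly]
  rw [this]

lemma compl_sum {n m : ℕ} (hm : m ≤ n) (X : Matrix (Fin n) (Fin m) ℝ)
    (Xc : Matrix (Fin n) (Fin (n - m)) ℝ)
    (hX : Xᵀ * X = 1) (hXc : Xcᵀ * Xc = 1) (hXXc : Xᵀ * Xc = 0) :
    X * Xᵀ + Xc * Xcᵀ = 1 := by
  have e : Fin n ≃ Fin m ⊕ Fin (n - m) :=
    (finCongr (by omega : n = m + (n - m))).trans finSumFinEquiv.symm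
  have hXcX : Xcᵀ * X = 0 := by
    have := congrArg Matrix.transpose hXXc
    rwa [Matrix.transpose_mul, Matrix.transpose_transpose, Matrix.transpose_zero] at this
  have h : fromRows Xᵀ Xcᵀ * fromCols X Xc = 1 := by
    rw [fromRows_mul_fromCols, hX, hXc, hXXc, hXcX, ← Matrix.fromBlocks_one]
  have h2 := (fromCols_mul_fromRows_eq_one_comm e X Xc Xᵀ Xcᵀ).mpr h
  rwa [fromCols_mul_fromRows] at h2

end Stmt10Aux

open Stmt10Aux

/-- the nonzero canonical angles between two m-dimensional
subspaces X, Y of ℝⁿ (given via matrices whose columns are orthonormal bases)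
coincide, with multiplicity, with the nonzero canonical angles between the
orthogonal complements X⊥ and Y⊥ (given via orthonormal bases of the
complements). Canonical angles are arccos of the singular values of XᵀY,
realized here as arccos of the square roots of the eigenvalues of (XᵀY)ᵀ(XᵀY). -/
theorem stmt_10 (n m : ℕ) (hm : m ≤ n)
    (X Y : Matrix (Fin n) (Fin m) ℝ)
    (Xc Yc : Matrix (Fin n) (Fin (n - m)) ℝ)
    (hX : Xᵀ * X = 1) (hY : Yᵀ * Y = 1)
    (hXc : Xcᵀ * Xc = 1) (hYc : Ycᵀ * Yc = 1)
    (hXXc : Xᵀ * Xc = 0) (hYYc : Yᵀ * Yc = 0)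
    (h1 : ((Xᵀ * Y)ᵀ * (Xᵀ * Y)).IsHermitian)
    (h2 : ((Xcᵀ * Yc)ᵀ * (Xcᵀ * Yc)).IsHermitian) :
    Multiset.filter (fun θ => θ ≠ 0)
        (Finset.univ.val.map fun i : Fin m =>
          Real.arccos (Real.sqrt (h1.eigenvalues i))) =
      Multiset.filter (fun θ => θ ≠ 0)
        (Finset.univ.val.map fun i : Fin (n - m) =>
          Real.arccos (Real.sqrt (h2.eigenvalues i))) := by
  have hXX : X * Xᵀ + Xc * Xcᵀ = 1 := compl_sum hm X Xc hX hXc hXXc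
  have hYY : Y * Yᵀ + Yc * Ycᵀ = 1 := compl_sum hm Y Yc hY hYc hYYc
  set C : Matrix (Fin (n - m)) (Fin m) ℝ := Xcᵀ * Y with hC
  have hA : (Xᵀ * Y)ᵀ * (Xᵀ * Y) = 1 - Cᵀ * C := by
    have hx : X * Xᵀ = 1 - Xc * Xcᵀ := eq_sub_of_add_eq hXX
    have e1 : (Xᵀ * Y)ᵀ * (Xᵀ * Y) = Yᵀ * (X * Xᵀ) * Y := by
      rw [Matrix.transpose_mul, Matrix.transpose_transpose, Matrix.mul_assoc,
        Matrix.mul_assoc, Matrix.mul_assoc]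
    rw [e1, hx, Matrix.mul_sub, Matrix.sub_mul, Matrix.mul_one, hY, hC,
      Matrix.transpose_mul, Matrix.transpose_transpose]
    congr 1
    simp only [Matrix.mul_assoc]
  have hB : (Xcᵀ * Yc) * (Xcᵀ * Yc)ᵀ = 1 - C * Cᵀ := by
    have hy : Yc * Ycᵀ = 1 - Y * Yᵀ := by
      rw [eq_sub_iff_add_eq, add_comm]
      exact hYY
    have e1 : (Xcᵀ * Yc) * (Xcᵀ * Yc)ᵀ = Xcᵀ * (Yc * Ycᵀ) * Xc := by
      rw [Matrix.transpose_mul, Matrix.transpose_transpose, Matrix.mul_assoc,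
        Matrix.mul_assoc, Matrix.mul_assoc]
    rw [e1, hy, Matrix.mul_sub, Matrix.sub_mul, Matrix.mul_one, hXc, hC,
      Matrix.transpose_mul, Matrix.transpose_transpose]
    congr 1
    simp only [Matrix.mul_assoc]
  -- the key polynomial identity
  have hpoly : (1 - Cᵀ * C).charpoly * (Polynomial.X - 1) ^ (n - m)
      = (1 - C * Cᵀ).charpoly * (Polynomial.X - 1) ^ m := by
    apply Polynomial.eq_of_infinite_eval_eq
    apply ((Set.finite_singleton (1 : ℝ)).infinite_compl).mono
    intro t ht
    have hs : t - 1 ≠ 0 := sub_ne_zero.mpr ht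
    simp only [Set.mem_setOf_eq, Polynomial.eval_mul, Polynomial.eval_pow,
      Polynomial.eval_sub, Polynomial.eval_X, Polynomial.eval_one, eval_charpoly]
    have rw1 : t • (1 : Matrix (Fin m) (Fin m) ℝ) - (1 - Cᵀ * C)
        = (t - 1) • 1 + Cᵀ * C := by
      rw [sub_smul, one_smul]; abel
    have rw2 : t • (1 : Matrix (Fin (n - m)) (Fin (n - m)) ℝ) - (1 - C * Cᵀ)
        = (t - 1) • 1 + C * Cᵀ := by
      rw [sub_smul, one_smul]; abel
    rw [rw1, rw2]
    exact key_det Cᵀ C hs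
  have hch1 : ((Xᵀ * Y)ᵀ * (Xᵀ * Y)).charpoly = (1 - Cᵀ * C).charpoly := by rw [hA]
  have hch2 : ((Xcᵀ * Yc)ᵀ * (Xcᵀ * Yc)).charpoly = (1 - C * Cᵀ).charpoly := by
    rw [charpoly_comm_square (Xcᵀ * Yc), hB]
  have hXm : (Polynomial.X - 1 : Polynomial ℝ) ≠ 0 := by
    rw [← Polynomial.C_1]; exact Polynomial.X_sub_C_ne_zero 1
  have hroots : ((Xᵀ * Y)ᵀ * (Xᵀ * Y)).charpoly.roots + Multiset.replicate (n - m) 1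
      = ((Xcᵀ * Yc)ᵀ * (Xcᵀ * Yc)).charpoly.roots + Multiset.replicate m 1 := by
    have h := congrArg Polynomial.roots hpoly
    rw [Polynomial.roots_mul
        (mul_ne_zero (Matrix.charpoly_monic _).ne_zero (pow_ne_zero _ hXm)),
      Polynomial.roots_mul
        (mul_ne_zero (Matrix.charpoly_monic _).ne_zero (pow_ne_zero _ hXm)),
      Polynomial.roots_pow, Polynomial.roots_pow, ← Polynomial.C_1,
      Polynomial.roots_X_sub_C] at h
    rw [hch1, hch2]
    simpa [Multiset.nsmul_singleton] using h
  have hfilt : ((Xᵀ * Y)ᵀ * (Xᵀ * Y)).charpoly.roots.filter (fun x : ℝ => x < 1)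
      = ((Xcᵀ * Yc)ᵀ * (Xcᵀ * Yc)).charpoly.roots.filter (fun x : ℝ => x < 1) := by
    have h := congrArg (Multiset.filter (fun x : ℝ => x < 1)) hroots
    have hrep : ∀ k : ℕ, Multiset.filter (fun x : ℝ => x < 1) (Multiset.replicate k 1) = 0 := by
      intro k
      rw [Multiset.filter_eq_nil]
      intro a ha
      rw [Multiset.eq_of_mem_replicate ha]
      exact lt_irrefl 1
    rwa [Multiset.filter_add, Multiset.filter_add, hrep, hrep, add_zero, add_zero] at h
  have hrw1 : (Finset.univ.val.map fun i : Fin m => Real.arccos (Real.sqrt (h1.eigenvalues i)))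
      = (Finset.univ.val.map h1.eigenvalues).map fun lam => Real.arccos (Real.sqrt lam) := by
    rw [Multiset.map_map]; rfl
  have hrw2 : (Finset.univ.val.map fun i : Fin (n - m) =>
        Real.arccos (Real.sqrt (h2.eigenvalues i)))
      = (Finset.univ.val.map h2.eigenvalues).map fun lam => Real.arccos (Real.sqrt lam) := by
    rw [Multiset.map_map]; rfl
  rw [hrw1, hrw2]
  have hnn1 : ∀ a ∈ Finset.univ.val.map h1.eigenvalues, (0 : ℝ) ≤ a := by
    intro a ha
    obtain ⟨i, _, rfl⟩ := Multiset.mem_map.mp ha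
    have hp : ((Xᵀ * Y)ᵀ * (Xᵀ * Y)).PosSemidef := by
      have := Matrix.posSemidef_conjTranspose_mul_self (Xᵀ * Y)
      rwa [Matrix.conjTranspose_eq_transpose_of_trivial] at this
    exact hp.eigenvalues_nonneg i
  have hnn2 : ∀ a ∈ Finset.univ.val.map h2.eigenvalues, (0 : ℝ) ≤ a := by
    intro a ha
    obtain ⟨i, _, rfl⟩ := Multiset.mem_map.mp ha
    have hp : ((Xcᵀ * Yc)ᵀ * (Xcᵀ * Yc)).PosSemidef := by
      have := Matrix.posSemidef_conjTranspose_mul_self (Xcᵀ * Yc)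
      rwa [Matrix.conjTranspose_eq_transpose_of_trivial] at this
    exact hp.eigenvalues_nonneg i
  have hpred : ∀ (s : Multiset ℝ), (∀ a ∈ s, (0 : ℝ) ≤ a) →
      Multiset.filter ((fun θ : ℝ => θ ≠ 0) ∘ fun lam => Real.arccos (Real.sqrt lam)) s
        = Multiset.filter (fun x : ℝ => x < 1) s := by
    intro s hs
    apply Multiset.filter_congr
    intro a ha
    simp [Real.arccos_eq_zero, not_le]
  conv_lhs => rw [Multiset.filter_map, hpred _ hnn1, eig_multiset h1]
  conv_rhs => rw [Multiset.filter_map, hpred _ hnn2, eig_multiset h2]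
  rw [hfilt]
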